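/- Let N ≥ 2, let λ0 > 0, λ1 > 0 and a0 > 0, a1 > 0, and let y ∈ ℝ^N. For a > 0 let φ(x; a) = (1/a)·log(1 + a·|x|) be the logarithmic penalty. If a0·λ0 + 4·a1·λ1 ≤ 1, then the function F : ℝ^N → ℝ defined by F(x) = (1/2)‖y − x‖₂² + λ0·Σ_{n=1}^{N} φ(x_n; a0) + λ1·Σ_{n=1}^{N−1} φ((Dx)_n; a1) is strictly convex. -/

import Mathlib

open Set Finset

/-- derivative of the shifted log penalty plus quadratic, on `1 + a·u > 0`. -/
private lemma logpen_hasDerivAt (a : ℝ) (ha : 0 < a) {u : ℝ} (hu : 0 < 1 + a * u) :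
    HasDerivAt (fun u : ℝ => (1 / a) * Real.log (1 + a * u) + a / 2 * u ^ 2)
      (1 / (1 + a * u) + a * u) u := by
  have h1 : HasDerivAt (fun u : ℝ => 1 + a * u) a u := by
    simpa using ((hasDerivAt_id u).const_mul a).const_add 1
  have h2 : HasDerivAt (fun u : ℝ => Real.log (1 + a * u)) (a / (1 + a * u)) u :=
    h1.log (ne_of_gt hu)
  have h4 := (h2.const_mul (1 / a)).add ((hasDerivAt_pow 2 u).const_mul (a / 2))
  refine HasDerivAt.congr_deriv h4 ?_
  simp only [Nat.cast_ofNat, pow_one]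
  field_simp
  ring

private lemma logpen_deriv_hasDerivAt (a : ℝ) {u : ℝ} (hu : 0 < 1 + a * u) :
    HasDerivAt (fun u : ℝ => 1 / (1 + a * u) + a * u) (-a / (1 + a * u) ^ 2 + a) u := by
  have h1 : HasDerivAt (fun u : ℝ => 1 + a * u) a u := by
    simpa using ((hasDerivAt_id u).const_mul a).const_add 1
  have h2 : HasDerivAt (fun u : ℝ => (1 + a * u)⁻¹) (-a / (1 + a * u) ^ 2) u :=
    h1.inv (ne_of_gt hu)
  have h3 : HasDerivAt (fun u : ℝ => a * u) a u := by
    simpa using (hasDerivAt_id u).const_mul a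
  have heq : (fun u : ℝ => 1 / (1 + a * u) + a * u)
      = fun u : ℝ => (1 + a * u)⁻¹ + a * u := by
    funext v; rw [one_div]
  rw [heq]
  exact h2.add h3

/-- The even extension: `t ↦ (1/a)·log(1+a|t|) + (a/2)t²` is convex on ℝ. -/
private lemma logpen_convexOn (a : ℝ) (ha : 0 < a) :
    ConvexOn ℝ (Set.univ : Set ℝ)
      (fun t : ℝ => (1 / a) * Real.log (1 + a * |t|) + a / 2 * t ^ 2) := by
  set f : ℝ → ℝ := fun u => (1 / a) * Real.log (1 + a * u) + a / 2 * u ^ 2 with hf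
  set U : Set ℝ := {u : ℝ | 0 < 1 + a * u} with hUdef
  have hUopen : IsOpen U := by
    have : U = (fun u : ℝ => 1 + a * u) ⁻¹' (Ioi 0) := rfl
    rw [this]
    exact IsOpen.preimage (by continuity) isOpen_Ioi
  have hIciU : Ici (0 : ℝ) ⊆ U := by
    intro u hu
    have hu0 : (0 : ℝ) ≤ u := hu
    have : 0 ≤ a * u := mul_nonneg ha.le hu0
    simp only [hUdef, mem_setOf_eq]
    linarith
  have hder : ∀ u ∈ U, HasDerivAt f (1 / (1 + a * u) + a * u) u := by
    intro u hu
    exact logpen_hasDerivAt a ha hu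
  have hderiv_eq : ∀ u ∈ U, deriv f u = 1 / (1 + a * u) + a * u :=
    fun u hu => (hder u hu).deriv
  have hcont : ContinuousOn f (Ici 0) := fun u hu =>
    ((hder u (hIciU hu)).differentiableAt.continuousAt).continuousWithinAt
  have hdiff : DifferentiableOn ℝ f (interior (Ici (0 : ℝ))) := fun u hu =>
    ((hder u (hIciU (interior_subset hu))).differentiableAt).differentiableWithinAt
  have hev : ∀ u ∈ U, deriv f =ᶠ[nhds u] (fun u => 1 / (1 + a * u) + a * u) := by
    intro u hu
    filter_upwards [hUopen.mem_nhds hu] with v hv using hderiv_eq v hv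
  have hdiff2 : DifferentiableOn ℝ (deriv f) (interior (Ici (0 : ℝ))) := by
    intro u hu
    have hu' : u ∈ U := hIciU (interior_subset hu)
    have hd : DifferentiableAt ℝ (fun u : ℝ => 1 / (1 + a * u) + a * u) u :=
      (logpen_deriv_hasDerivAt a hu').differentiableAt
    exact (hd.congr_of_eventuallyEq (hev u hu')).differentiableWithinAt
  have h2nd : ∀ u ∈ interior (Ici (0 : ℝ)), 0 ≤ deriv^[2] f u := by
    intro u hu
    have hu0 : (0 : ℝ) < u := by simpa [interior_Ici] using hu
    have hu' : u ∈ U := hIciU hu0.le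
    have huu : 0 < 1 + a * u := hu'
    have hd2 : deriv (deriv f) u = -a / (1 + a * u) ^ 2 + a := by
      rw [Filter.EventuallyEq.deriv_eq (hev u hu')]
      exact (logpen_deriv_hasDerivAt a hu').deriv
    have : deriv^[2] f u = deriv (deriv f) u := rfl
    rw [this, hd2]
    have h1 : (1 : ℝ) ≤ (1 + a * u) ^ 2 := by nlinarith [mul_pos ha hu0, sq_nonneg (a * u)]
    have h2 : a / (1 + a * u) ^ 2 ≤ a := div_le_self ha.le h1
    have h3 : -a / (1 + a * u) ^ 2 = -(a / (1 + a * u) ^ 2) := neg_div _ _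
    rw [h3]
    linarith
  have hIci : ConvexOn ℝ (Ici (0 : ℝ)) f :=
    convexOn_of_deriv2_nonneg (convex_Ici 0) hcont hdiff hdiff2 h2nd
  have hmono : MonotoneOn f (Ici (0 : ℝ)) := by
    apply monotoneOn_of_deriv_nonneg (convex_Ici (0:ℝ)) hcont hdiff
    intro u hu
    have hu0 : (0 : ℝ) < u := by simpa [interior_Ici] using hu
    have hu' : u ∈ U := hIciU hu0.le
    have huu : 0 < 1 + a * u := hu'
    rw [hderiv_eq u hu']
    have h1 : 0 ≤ 1 / (1 + a * u) := by positivity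
    have h2 : 0 ≤ a * u := mul_nonneg ha.le hu0.le
    linarith
  have himg : (fun t : ℝ => |t|) '' (Set.univ : Set ℝ) = Set.Ici 0 := by
    ext x
    constructor
    · rintro ⟨t, -, rfl⟩; exact abs_nonneg t
    · intro hx; exact ⟨x, trivial, abs_of_nonneg hx⟩
  have habs : ConvexOn ℝ (Set.univ : Set ℝ) (fun t : ℝ => |t|) := by
    have : (fun t : ℝ => ‖t‖) = fun t : ℝ => |t| := funext fun t => Real.norm_eq_abs t
    exact this ▸ convexOn_univ_norm
  have h1 : ConvexOn ℝ ((fun t : ℝ => |t|) '' Set.univ) f := by rw [himg]; exact hIci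
  have h2 : MonotoneOn f ((fun t : ℝ => |t|) '' Set.univ) := by rw [himg]; exact hmono
  have hcomp : ConvexOn ℝ (Set.univ : Set ℝ) (f ∘ fun t : ℝ => |t|) :=
    ConvexOn.comp h1 habs h2
  have hfun : (fun t : ℝ => (1 / a) * Real.log (1 + a * |t|) + a / 2 * t ^ 2)
      = f ∘ fun t : ℝ => |t| := by
    funext t
    simp [hf, Function.comp, sq_abs]
  rw [hfun]
  exact hcomp

private lemma convexOn_finset_sum {E : Type*} [AddCommGroup E] [Module ℝ E] {ι : Type*}
    (s : Finset ι) (f : ι → E → ℝ) (h : ∀ i ∈ s, ConvexOn ℝ (Set.univ : Set E) (f i)) :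
    ConvexOn ℝ (Set.univ : Set E) (fun x => ∑ i ∈ s, f i x) := by
  classical
  induction s using Finset.cons_induction with
  | empty => simpa using convexOn_const (0 : ℝ) convex_univ
  | cons i s hi ih =>
    simp only [Finset.sum_cons]
    exact (h i (Finset.mem_cons_self i s)).add (ih fun j hj => h j (Finset.mem_cons_of_mem hj))

/-- key strict inequality: `‖Dv‖² < 4‖v‖²` for `v ≠ 0`. -/
private lemma diff_sq_lt (N : ℕ) (v : Fin (N + 1) → ℝ) (hv : v ≠ 0) :
    ∑ i : Fin N, (v i.succ - v i.castSucc) ^ 2 < 4 * ∑ n, (v n) ^ 2 := by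
  have hle : ∀ i : Fin N, (v i.succ - v i.castSucc) ^ 2
      ≤ 2 * (v i.succ) ^ 2 + 2 * (v i.castSucc) ^ 2 := by
    intro i; nlinarith [sq_nonneg (v i.succ + v i.castSucc)]
  have hsum1 : ∑ i : Fin N, (v i.castSucc) ^ 2
      = (∑ n, (v n) ^ 2) - (v (Fin.last N)) ^ 2 := by
    rw [Fin.sum_univ_castSucc (f := fun n => (v n) ^ 2)]; ring
  have hsum2 : ∑ i : Fin N, (v i.succ) ^ 2 = (∑ n, (v n) ^ 2) - (v 0) ^ 2 := by
    rw [Fin.sum_univ_succ (f := fun n => (v n) ^ 2)]; ring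
  have hsplit : ∑ i : Fin N, (2 * (v i.succ) ^ 2 + 2 * (v i.castSucc) ^ 2)
      = 4 * (∑ n, (v n) ^ 2) - 2 * (v 0) ^ 2 - 2 * (v (Fin.last N)) ^ 2 := by
    rw [Finset.sum_add_distrib, ← Finset.mul_sum, ← Finset.mul_sum, hsum1, hsum2]; ring
  by_cases h0 : v 0 = 0
  · have hex : ∃ i : Fin N, v i.succ + v i.castSucc ≠ 0 := by
      by_contra hall
      push_neg at hall
      have hall0 : ∀ n : Fin (N + 1), v n = 0 := by
        intro n
        induction n using Fin.induction with
        | zero => exact h0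
        | succ i ih => have := hall i; linarith
      apply hv
      funext n
      simpa using hall0 n
    obtain ⟨i, hi⟩ := hex
    have hstrict : ∑ i : Fin N, (v i.succ - v i.castSucc) ^ 2
        < ∑ i : Fin N, (2 * (v i.succ) ^ 2 + 2 * (v i.castSucc) ^ 2) := by
      apply Finset.sum_lt_sum (fun j _ => hle j)
      refine ⟨i, Finset.mem_univ i, ?_⟩
      have : 0 < (v i.succ + v i.castSucc) ^ 2 := by positivity
      nlinarith
    rw [hsplit] at hstrict
    nlinarith [sq_nonneg (v 0), sq_nonneg (v (Fin.last N))]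
  · have h1 : ∑ i : Fin N, (v i.succ - v i.castSucc) ^ 2
        ≤ ∑ i : Fin N, (2 * (v i.succ) ^ 2 + 2 * (v i.castSucc) ^ 2) :=
      Finset.sum_le_sum (fun j _ => hle j)
    rw [hsplit] at h1
    have h2 : 0 < (v 0) ^ 2 := by positivity
    nlinarith [sq_nonneg (v (Fin.last N))]

/-- **CNC fused lasso convexity with the logarithmic penalty.** For the
logarithmic penalty `φ(x; a) = (1/a)·log(1 + a|x|)` with `a > 0`, if
`a0·λ0 + 4·a1·λ1 ≤ 1` then the objective
`F(x) = ½‖y − x‖₂² + λ0 Σₙ φ(xₙ; a0) + λ1 Σₙ φ((Dx)ₙ; a1)` is strictly convex,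
where `(Dx)ₙ = x_{n+1} − xₙ` (the signal length is `N + 1 ≥ 2`). -/
theorem cnc_flsa_log_strictConvexOn (N : ℕ) (hN : 1 ≤ N)
    (lam0 lam1 a0 a1 : ℝ) (hlam0 : 0 < lam0) (hlam1 : 0 < lam1)
    (ha0 : 0 < a0) (ha1 : 0 < a1)
    (y : Fin (N + 1) → ℝ)
    (hcond : a0 * lam0 + 4 * a1 * lam1 ≤ 1) :
    StrictConvexOn ℝ (Set.univ : Set (Fin (N + 1) → ℝ))
      (fun x : Fin (N + 1) → ℝ =>
        (1 / 2) * ∑ n, (y n - x n) ^ 2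
          + lam0 * ∑ n, (1 / a0) * Real.log (1 + a0 * |x n|)
          + lam1 * ∑ i : Fin N,
              (1 / a1) * Real.log (1 + a1 * |x i.succ - x i.castSucc|)) := by
  set G : (Fin (N + 1) → ℝ) → ℝ := fun x =>
    (1 / 2) * ∑ n, (y n - x n) ^ 2 - a0 * lam0 / 2 * ∑ n, (x n) ^ 2
      - a1 * lam1 / 2 * ∑ i : Fin N, (x i.succ - x i.castSucc) ^ 2 with hGdef
  set C : (Fin (N + 1) → ℝ) → ℝ := fun x =>
    lam0 * ∑ n, ((1 / a0) * Real.log (1 + a0 * |x n|) + a0 / 2 * (x n) ^ 2)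
      + lam1 * ∑ i : Fin N, ((1 / a1) * Real.log (1 + a1 * |x i.succ - x i.castSucc|)
          + a1 / 2 * (x i.succ - x i.castSucc) ^ 2) with hCdef
  have hGs : StrictConvexOn ℝ (Set.univ : Set (Fin (N + 1) → ℝ)) G := by
    refine ⟨convex_univ, ?_⟩
    intro x _ z _ hxz a b ha hb hab
    have hb1 : b = 1 - a := by linarith
    simp only [smul_eq_mul]
    have hmid : ∀ n : Fin (N + 1), (a • x + b • z) n = a * x n + b * z n := by
      intro n; simp
    -- three per-sum identities
    have e1 : ∑ n, (y n - (a • x + b • z) n) ^ 2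
        = a * ∑ n, (y n - x n) ^ 2 + b * ∑ n, (y n - z n) ^ 2
          - a * b * ∑ n, (x n - z n) ^ 2 := by
      have h : ∀ n : Fin (N + 1), (y n - (a • x + b • z) n) ^ 2
          = a * (y n - x n) ^ 2 + b * (y n - z n) ^ 2 - a * b * (x n - z n) ^ 2 := by
        intro n; rw [hmid n, hb1]; ring
      rw [Finset.sum_congr rfl (fun n _ => h n), Finset.sum_sub_distrib,
        Finset.sum_add_distrib, ← Finset.mul_sum, ← Finset.mul_sum, ← Finset.mul_sum]
    have e2 : ∑ n, ((a • x + b • z) n) ^ 2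
        = a * ∑ n, (x n) ^ 2 + b * ∑ n, (z n) ^ 2 - a * b * ∑ n, (x n - z n) ^ 2 := by
      have h : ∀ n : Fin (N + 1), ((a • x + b • z) n) ^ 2
          = a * (x n) ^ 2 + b * (z n) ^ 2 - a * b * (x n - z n) ^ 2 := by
        intro n; rw [hmid n, hb1]; ring
      rw [Finset.sum_congr rfl (fun n _ => h n), Finset.sum_sub_distrib,
        Finset.sum_add_distrib, ← Finset.mul_sum, ← Finset.mul_sum, ← Finset.mul_sum]
    have e3 : ∑ i : Fin N, ((a • x + b • z) i.succ - (a • x + b • z) i.castSucc) ^ 2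
        = a * ∑ i : Fin N, (x i.succ - x i.castSucc) ^ 2
          + b * ∑ i : Fin N, (z i.succ - z i.castSucc) ^ 2
          - a * b * ∑ i : Fin N,
              ((x i.succ - z i.succ) - (x i.castSucc - z i.castSucc)) ^ 2 := by
      have h : ∀ i : Fin N, ((a • x + b • z) i.succ - (a • x + b • z) i.castSucc) ^ 2
          = a * (x i.succ - x i.castSucc) ^ 2 + b * (z i.succ - z i.castSucc) ^ 2
            - a * b * ((x i.succ - z i.succ) - (x i.castSucc - z i.castSucc)) ^ 2 := by
        intro i; rw [hmid i.succ, hmid i.castSucc, hb1]; ring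
      rw [Finset.sum_congr rfl (fun i _ => h i), Finset.sum_sub_distrib,
        Finset.sum_add_distrib, ← Finset.mul_sum, ← Finset.mul_sum, ← Finset.mul_sum]
    -- positivity of the defect
    set v : Fin (N + 1) → ℝ := x - z with hvdef
    have hvne : v ≠ 0 := sub_ne_zero.mpr hxz
    have hv1 : ∑ n, (x n - z n) ^ 2 = ∑ n, (v n) ^ 2 := by
      refine Finset.sum_congr rfl fun n _ => ?_; simp [hvdef]
    have hv2 : ∑ i : Fin N, ((x i.succ - z i.succ) - (x i.castSucc - z i.castSucc)) ^ 2
        = ∑ i : Fin N, (v i.succ - v i.castSucc) ^ 2 := by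
      refine Finset.sum_congr rfl fun i _ => ?_; simp [hvdef]
    have hD : ∑ i : Fin N, (v i.succ - v i.castSucc) ^ 2 < 4 * ∑ n, (v n) ^ 2 :=
      diff_sq_lt N v hvne
    have hSnn : 0 ≤ ∑ n, (v n) ^ 2 := Finset.sum_nonneg fun n _ => sq_nonneg _
    have hKpos : 0 < (1 - a0 * lam0) / 2 * ∑ n, (v n) ^ 2
        - a1 * lam1 / 2 * ∑ i : Fin N, (v i.succ - v i.castSucc) ^ 2 := by
      have hDnn : 0 ≤ ∑ i : Fin N, (v i.succ - v i.castSucc) ^ 2 :=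
        Finset.sum_nonneg fun i _ => sq_nonneg _
      have hk1 : 0 < a1 * lam1 := mul_pos ha1 hlam1
      nlinarith [mul_nonneg (by nlinarith : (0:ℝ) ≤ 1 - a0 * lam0 - 4 * a1 * lam1) hSnn,
        mul_pos hk1 (by linarith : (0:ℝ) < 4 * ∑ n, (v n) ^ 2
          - ∑ i : Fin N, (v i.succ - v i.castSucc) ^ 2)]
    have key : G (a • x + b • z) = a * G x + b * G z
        - a * b * ((1 - a0 * lam0) / 2 * ∑ n, (v n) ^ 2
          - a1 * lam1 / 2 * ∑ i : Fin N, (v i.succ - v i.castSucc) ^ 2) := by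
      simp only [hGdef]
      rw [e1, e2, e3, hv1, hv2, hb1]
      ring
    have habpos : 0 < a * b := mul_pos ha hb
    rw [key]
    nlinarith [mul_pos habpos hKpos]
  have hCs : ConvexOn ℝ (Set.univ : Set (Fin (N + 1) → ℝ)) C := by
    have hc0 := logpen_convexOn a0 ha0
    have hc1 := logpen_convexOn a1 ha1
    have hterm0 : ∀ n : Fin (N + 1), ConvexOn ℝ (Set.univ : Set (Fin (N + 1) → ℝ))
        (fun x : Fin (N + 1) → ℝ =>
          (1 / a0) * Real.log (1 + a0 * |x n|) + a0 / 2 * (x n) ^ 2) := by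
      intro n
      have := hc0.comp_affineMap
        ((LinearMap.proj n : (Fin (N + 1) → ℝ) →ₗ[ℝ] ℝ).toAffineMap)
      simpa [Function.comp_def] using this
    have hterm1 : ∀ i : Fin N, ConvexOn ℝ (Set.univ : Set (Fin (N + 1) → ℝ))
        (fun x : Fin (N + 1) → ℝ =>
          (1 / a1) * Real.log (1 + a1 * |x i.succ - x i.castSucc|)
            + a1 / 2 * (x i.succ - x i.castSucc) ^ 2) := by
      intro i
      have := hc1.comp_affineMap
        (((LinearMap.proj i.succ : (Fin (N + 1) → ℝ) →ₗ[ℝ] ℝ)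
          - (LinearMap.proj i.castSucc)).toAffineMap)
      simpa [Function.comp_def] using this
    have hS0 : ConvexOn ℝ (Set.univ : Set (Fin (N + 1) → ℝ))
        (fun x => ∑ n, ((1 / a0) * Real.log (1 + a0 * |x n|) + a0 / 2 * (x n) ^ 2)) :=
      convexOn_finset_sum _ _ (fun n _ => hterm0 n)
    have hS1 : ConvexOn ℝ (Set.univ : Set (Fin (N + 1) → ℝ))
        (fun x => ∑ i : Fin N, ((1 / a1) * Real.log (1 + a1 * |x i.succ - x i.castSucc|)
          + a1 / 2 * (x i.succ - x i.castSucc) ^ 2)) :=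
      convexOn_finset_sum _ _ (fun i _ => hterm1 i)
    have h0 := hS0.smul hlam0.le
    have h1 := hS1.smul hlam1.le
    have := h0.add h1
    simpa [hCdef, smul_eq_mul, Pi.add_def] using this
  have hsum := hGs.add_convexOn hCs
  have hFeq : (fun x : Fin (N + 1) → ℝ =>
        (1 / 2) * ∑ n, (y n - x n) ^ 2
          + lam0 * ∑ n, (1 / a0) * Real.log (1 + a0 * |x n|)
          + lam1 * ∑ i : Fin N,
              (1 / a1) * Real.log (1 + a1 * |x i.succ - x i.castSucc|))
      = fun x => G x + C x := by
    funext x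
    simp only [hGdef, hCdef, Finset.sum_add_distrib, ← Finset.mul_sum]
    ring
  rw [hFeq]
  exact hsum
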